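/- Let S be a unilateral weighted shift with positive bounded weights. For every non-zero x = Σ a_n e_n ∈ H, r₃(S) ≤ r_S(x) ≤ r(S), where r₃(S) = limsup β_n^{1/n} and r_S(x) = limsup ‖Sⁿx‖^{1/n} is the local spectral radius. -/

import Mathlib

open Filter

variable {H : Type*} [NormedAddCommGroup H] [InnerProductSpace ℂ H] [CompleteSpace H]

lemma my_repr_S (S : H →L[ℂ] H) (e : HilbertBasis ℕ ℂ H) (ω : ℕ → ℝ)
    (hS : ∀ n, S (e n) = (ω n : ℂ) • e (n + 1)) (y : H) (k : ℕ) :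
    e.repr (S y) (k + 1) = (ω k : ℂ) * e.repr y k := by
  have h1 := e.hasSum_repr y
  have h2 : HasSum (fun i => (e.repr y i * (ω i : ℂ)) • e (i + 1)) (S y) := by
    simpa only [map_smul, hS, smul_smul] using S.hasSum h1
  have h3 : HasSum (fun i => (e.repr y i * (ω i : ℂ)) * (inner ℂ (e (k+1)) (e (i+1)) : ℂ))
      ((inner ℂ (e (k+1)) (S y) : ℂ)) := by
    simpa [inner_smul_right] using (innerSL ℂ (e (k+1))).hasSum h2
  have horth := orthonormal_iff_ite.mp e.orthonormal
  have h4 : HasSum (fun i => if i = k then (e.repr y k * (ω k : ℂ)) else 0)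
      ((inner ℂ (e (k+1)) (S y) : ℂ)) := by
    refine h3.congr_fun fun i => ?_
    rw [horth]
    by_cases h : i = k
    · simp [h]
    · simp [h, Ne.symm h]
  have h5 := h4.unique (hasSum_ite_eq k _)
  rw [e.repr_apply_apply]
  rw [h5]; ring

lemma my_repr_pow (S : H →L[ℂ] H) (e : HilbertBasis ℕ ℂ H) (ω : ℕ → ℝ)
    (hS : ∀ n, S (e n) = (ω n : ℂ) • e (n + 1)) (x : H) (k : ℕ) : ∀ n : ℕ,
    e.repr ((S ^ n) x) (n + k) = ((∏ i ∈ Finset.Ico k (n + k), ω i : ℝ) : ℂ) * e.repr x k := by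
  intro n
  induction n with
  | zero => simp
  | succ n ih =>
    have h1 : (S ^ (n + 1)) x = S ((S ^ n) x) := by
      rw [pow_succ']; rfl
    have h2 : n + 1 + k = (n + k) + 1 := by omega
    rw [h1, h2, my_repr_S S e ω hS, ih, Finset.prod_Ico_succ_top (Nat.le_add_left k n)]
    push_cast
    ring

lemma my_norm_bound (S : H →L[ℂ] H) (e : HilbertBasis ℕ ℂ H) (ω : ℕ → ℝ)
    (hS : ∀ n, S (e n) = (ω n : ℂ) • e (n + 1)) (x : H) (k n : ℕ) :
    ‖e.repr x k‖ * (∏ i ∈ Finset.Ico k (n + k), ω i) ≤ ‖(S ^ n) x‖ := by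
  have h1 : ‖e.repr ((S ^ n) x) (n + k)‖ ≤ ‖(S ^ n) x‖ := by
    have := lp.norm_apply_le_norm (by norm_num : (2 : ENNReal) ≠ 0) (e.repr ((S ^ n) x)) (n + k)
    simpa using this
  rw [my_repr_pow S e ω hS x k n] at h1
  rw [norm_mul] at h1
  calc ‖e.repr x k‖ * (∏ i ∈ Finset.Ico k (n + k), ω i)
      ≤ ‖((∏ i ∈ Finset.Ico k (n + k), ω i : ℝ) : ℂ)‖ * ‖e.repr x k‖ := by
        rw [Complex.norm_real]
        rw [mul_comm]
        gcongr
        exact le_abs_self _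
    _ ≤ ‖(S ^ n) x‖ := h1

lemma my_tendsto_rpow_inv (c : ℝ) (hc : 0 < c) :
    Tendsto (fun n : ℕ => c ^ ((n : ℝ)⁻¹)) atTop (nhds 1) := by
  have h0 : Tendsto (fun n : ℕ => ((n : ℝ))⁻¹) atTop (nhds 0) := by
    simpa [one_div] using tendsto_one_div_atTop_nhds_zero_nat (𝕜 := ℝ)
  have h1 : Tendsto (fun n : ℕ => Real.log c * (n : ℝ)⁻¹) atTop (nhds 0) := by
    simpa using h0.const_mul (Real.log c)
  have h2 := (Real.continuous_exp.tendsto 0).comp h1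
  simp only [Real.exp_zero] at h2
  refine h2.congr fun n => ?_
  simp [Function.comp, Real.rpow_def_of_pos hc, mul_comm]

/-- For a unilateral weighted shift `S` with positive bounded weights, and every non-zero
`x`, we have `r₃(S) ≤ r_S(x) ≤ r(S)`, where `r₃(S) = limsup (β n)^(1/n)` and
`r_S(x) = limsup ‖Sⁿ x‖^(1/n)` is the local spectral radius. -/
theorem localSpectralRadius_bounds (S : H →L[ℂ] H)
    (e : HilbertBasis ℕ ℂ H) (ω : ℕ → ℝ) (hpos : ∀ n, 0 < ω n)
    (hbd : ∃ M : ℝ, ∀ n, ω n ≤ M)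
    (hS : ∀ n, S (e n) = (ω n : ℂ) • e (n + 1))
    (x : H) (hx : x ≠ 0) :
    (atTop.limsup fun n : ℕ => (∏ i ∈ Finset.range n, ω i) ^ ((n : ℝ)⁻¹)) ≤
        (atTop.limsup fun n : ℕ => ‖(S ^ n) x‖ ^ ((n : ℝ)⁻¹)) ∧
      (atTop.limsup fun n : ℕ => ‖(S ^ n) x‖ ^ ((n : ℝ)⁻¹)) ≤
        (spectralRadius ℂ S).toReal := by
  haveI : Nontrivial H := nontrivial_of_ne x 0 hx
  set u : ℕ → ℝ := fun n : ℕ => ‖(S ^ n) x‖ ^ ((n : ℝ)⁻¹) with hu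
  set β : ℕ → ℝ := fun n : ℕ => (∏ i ∈ Finset.range n, ω i) ^ ((n : ℝ)⁻¹) with hβ
  have hu0 : ∀ n, 0 ≤ u n := fun n => Real.rpow_nonneg (norm_nonneg _) _
  -- boundedness of u
  set C : ℝ := max ‖S‖ 1 * max ‖x‖ 1 with hC
  have hC1 : (1 : ℝ) ≤ C := one_le_mul_of_one_le_of_one_le (le_max_right _ _) (le_max_right _ _)
  have hub : ∀ n, u n ≤ C := by
    intro n
    rcases Nat.eq_zero_or_pos n with h0 | h1
    · simp only [hu, h0]
      simpa using hC1
    · have hn0 : (n : ℝ) ≠ 0 := Nat.cast_ne_zero.mpr (by omega)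
      have hb : ‖(S ^ n) x‖ ≤ C ^ n := by
        have hS' : ‖S ^ n‖ ≤ (max ‖S‖ 1) ^ n :=
          (norm_pow_le' S h1).trans (pow_le_pow_left₀ (norm_nonneg _) (le_max_left _ _) n)
        have hx' : ‖x‖ ≤ (max ‖x‖ 1) ^ n :=
          (le_max_left _ _).trans (le_self_pow₀ (le_max_right _ _) (by omega))
        calc ‖(S ^ n) x‖ ≤ ‖S ^ n‖ * ‖x‖ := (S ^ n).le_opNorm x
          _ ≤ (max ‖S‖ 1) ^ n * (max ‖x‖ 1) ^ n :=
              mul_le_mul hS' hx' (norm_nonneg _) (by positivity)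
          _ = C ^ n := (mul_pow _ _ n).symm
      calc u n ≤ (C ^ n) ^ ((n : ℝ)⁻¹) :=
            Real.rpow_le_rpow (norm_nonneg _) hb (by positivity)
        _ = C := by
            rw [← Real.rpow_natCast C n, ← Real.rpow_mul (by linarith), mul_inv_cancel₀ hn0,
              Real.rpow_one]
  have hbdd : IsBoundedUnder (· ≤ ·) atTop u := isBoundedUnder_of ⟨C, hub⟩
  have hcob : IsCoboundedUnder (· ≤ ·) atTop u := isCoboundedUnder_le_of_le atTop hu0
  set R : ℝ := atTop.limsup u with hR
  have hR0 : 0 ≤ R := le_limsup_of_frequently_le (Frequently.of_forall hu0) hbdd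
  constructor
  · -- Part 1 : limsup β ≤ R
    obtain ⟨k₀, hk₀⟩ : ∃ k, e.repr x k ≠ 0 := by
      by_contra h
      push_neg at h
      apply hx
      have h0 : e.repr x = 0 := by
        ext k
        simpa using h k
      have := e.repr.injective (by rw [h0, map_zero] : e.repr x = e.repr 0)
      exact this
    set c : ℝ := ‖e.repr x k₀‖ with hc
    have hc0 : 0 < c := norm_pos_iff.mpr hk₀
    set B₀ : ℝ := ∏ i ∈ Finset.range k₀, ω i with hB₀
    have hB₀0 : 0 < B₀ := Finset.prod_pos fun i _ => hpos i
    refine le_of_forall_pos_le_add fun ε hε => ?_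
    have hRε : 0 < R + ε := by linarith
    obtain ⟨N, hN⟩ : ∃ N, ∀ n ≥ N, u n < R + ε := by
      have := eventually_lt_of_limsup_lt (show atTop.limsup u < R + ε by linarith) hbdd
      exact eventually_atTop.mp this
    set K : ℝ := B₀ / (c * (R + ε) ^ k₀) with hK
    have hK0 : 0 < K := by positivity
    -- eventual bound : β m ≤ K'^{1/m} * (R+ε)
    have hkey : ∀ m ≥ N + k₀ + 1, β m ≤ K ^ ((m : ℝ)⁻¹) * (R + ε) := by
      intro m hm
      set n : ℕ := m - k₀ with hn
      have hmn : m = n + k₀ := by omega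
      have hnN : N ≤ n := by omega
      have hn1 : 1 ≤ n := by omega
      have hm1 : (1 : ℕ) ≤ m := by omega
      have hm0 : (m : ℝ) ≠ 0 := Nat.cast_ne_zero.mpr (by omega)
      have hpow : ‖(S ^ n) x‖ ≤ (R + ε) ^ n := by
        have hlt := hN n hnN
        have heq : ‖(S ^ n) x‖ = (u n) ^ n := by
          rw [hu]
          rw [← Real.rpow_natCast (‖(S ^ n) x‖ ^ ((n : ℝ)⁻¹)) n,
            ← Real.rpow_mul (norm_nonneg _), inv_mul_cancel₀
              (Nat.cast_ne_zero.mpr (by omega) : (n : ℝ) ≠ 0), Real.rpow_one]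
        rw [heq]
        exact pow_le_pow_left₀ (hu0 n) (le_of_lt hlt) n
      have hprod : c * (∏ i ∈ Finset.Ico k₀ (n + k₀), ω i) ≤ (R + ε) ^ n :=
        (my_norm_bound S e ω hS x k₀ n).trans hpow
      have hβm : (∏ i ∈ Finset.range m, ω i) ≤ K * (R + ε) ^ m := by
        have hsplit : (∏ i ∈ Finset.range m, ω i)
            = B₀ * (∏ i ∈ Finset.Ico k₀ (n + k₀), ω i) := by
          rw [hmn] at *
          exact (Finset.prod_range_mul_prod_Ico ω (Nat.le_add_left k₀ n)).symm
        have hIco : (∏ i ∈ Finset.Ico k₀ (n + k₀), ω i) ≤ (R + ε) ^ n / c := by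
          rw [le_div_iff₀ hc0, mul_comm]
          exact hprod
        have hKeq : K * (R + ε) ^ m = B₀ * ((R + ε) ^ n / c) := by
          rw [hK, hmn, pow_add]
          field_simp
        rw [hsplit, hKeq]
        gcongr
      calc β m ≤ (K * (R + ε) ^ m) ^ ((m : ℝ)⁻¹) := by
            rw [hβ]
            exact Real.rpow_le_rpow (Finset.prod_nonneg fun i _ => (hpos i).le) hβm
              (by positivity)
        _ = K ^ ((m : ℝ)⁻¹) * (R + ε) := by
            rw [Real.mul_rpow hK0.le (by positivity), ← Real.rpow_natCast (R + ε) m,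
              ← Real.rpow_mul hRε.le, mul_inv_cancel₀ hm0, Real.rpow_one]
    have hw : Tendsto (fun m : ℕ => K ^ ((m : ℝ)⁻¹) * (R + ε)) atTop (nhds (1 * (R + ε))) :=
      (my_tendsto_rpow_inv K hK0).mul tendsto_const_nhds
    have hlim : atTop.limsup β ≤ 1 * (R + ε) := by
      refine le_trans (limsup_le_limsup (eventually_atTop.mpr ⟨N + k₀ + 1, hkey⟩)
        (isCoboundedUnder_le_of_le atTop
          fun n => Real.rpow_nonneg (Finset.prod_nonneg fun i _ => (hpos i).le) _)
        hw.isBoundedUnder_le) ?_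
      exact le_of_eq hw.limsup_eq
    rw [one_mul] at hlim
    exact hlim
  · -- Part 2 : R ≤ spectral radius
    have hfin : spectralRadius ℂ S ≠ ⊤ :=
      ((spectrum.spectralRadius_le_nnnorm S).trans_lt ENNReal.coe_lt_top).ne
    have hG := spectrum.pow_nnnorm_pow_one_div_tendsto_nhds_spectralRadius S
    have hGr : Tendsto (fun n : ℕ => ‖S ^ n‖ ^ ((n : ℝ)⁻¹)) atTop
        (nhds (spectralRadius ℂ S).toReal) := by
      have h := (ENNReal.tendsto_toReal hfin).comp hG
      refine h.congr fun n => ?_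
      simp [Function.comp, ← ENNReal.toReal_rpow, one_div]
    have hx1 : Tendsto (fun n : ℕ => ‖x‖ ^ ((n : ℝ)⁻¹)) atTop (nhds 1) :=
      my_tendsto_rpow_inv ‖x‖ (norm_pos_iff.mpr hx)
    have hv := hGr.mul hx1
    rw [mul_one] at hv
    have hle : ∀ n, u n ≤ ‖S ^ n‖ ^ ((n : ℝ)⁻¹) * ‖x‖ ^ ((n : ℝ)⁻¹) := by
      intro n
      rw [← Real.mul_rpow (norm_nonneg _) (norm_nonneg _)]
      exact Real.rpow_le_rpow (norm_nonneg _) ((S ^ n).le_opNorm x) (by positivity)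
    calc R ≤ atTop.limsup (fun n : ℕ => ‖S ^ n‖ ^ ((n : ℝ)⁻¹) * ‖x‖ ^ ((n : ℝ)⁻¹)) :=
          limsup_le_limsup (Eventually.of_forall hle) hcob hv.isBoundedUnder_le
      _ = (spectralRadius ℂ S).toReal := hv.limsup_eq
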